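/- Uniqueness for the heat equation with modest growth: let u be a continuous real-valued function on ℝⁿ × [0,∞) that is bounded, infinitely differentiable on ℝⁿ × (0,∞), satisfies the heat equation ∂u/∂t = Δu on ℝⁿ × (0,∞), and satisfies u(x,0) = 0 for all x ∈ ℝⁿ. Then u ≡ 0. Consequently, for bounded continuous initial data f there is at most one bounded continuous solution of the heat equation on ℝⁿ × [0,∞) with u(·,0) = f. -/

import Mathlib

open MeasureTheory Real

/-- The Laplacian `Δf = ∑ j, ∂²f/∂x_j²` of a function on `ℝⁿ`. -/
noncomputable def laplacian {n : ℕ} (f : EuclideanSpace ℝ (Fin n) → ℝ)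
    (x : EuclideanSpace ℝ (Fin n)) : ℝ :=
  ∑ j : Fin n,
    fderiv ℝ (fun y => fderiv ℝ f y (EuclideanSpace.single j 1)) x (EuclideanSpace.single j 1)

/-- `u : ℝⁿ × [0,∞) → ℝ` is a bounded solution of the heat equation: it is continuous on
`ℝⁿ × [0,∞)`, bounded there, smooth on `ℝⁿ × (0,∞)`, and satisfies `∂u/∂t = Δu` for `t > 0`. -/
def IsBoundedHeatSolution {n : ℕ} (u : EuclideanSpace ℝ (Fin n) → ℝ → ℝ) : Prop :=
  ContinuousOn (fun p : EuclideanSpace ℝ (Fin n) × ℝ => u p.1 p.2)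
      {p : EuclideanSpace ℝ (Fin n) × ℝ | 0 ≤ p.2}
    ∧ (∃ C : ℝ, ∀ (x : EuclideanSpace ℝ (Fin n)) (t : ℝ), 0 ≤ t → |u x t| ≤ C)
    ∧ ContDiffOn ℝ ((⊤ : ℕ∞) : WithTop ℕ∞)
        (fun p : EuclideanSpace ℝ (Fin n) × ℝ => u p.1 p.2)
        {p : EuclideanSpace ℝ (Fin n) × ℝ | 0 < p.2}
    ∧ ∀ (x : EuclideanSpace ℝ (Fin n)) (t : ℝ), 0 < t →
        HasDerivAt (fun s : ℝ => u x s) (laplacian (fun y => u y t) x) t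

section Helpers
open Filter Set

lemma deriv_nonneg_of_left_max {f : ℝ → ℝ} {d a : ℝ}
    (hf : HasDerivAt f d a) (h : ∀ᶠ t in nhdsWithin a (Set.Iio a), f t ≤ f a) : 0 ≤ d := by
  have hs : Filter.Tendsto (slope f a) (nhdsWithin a (Set.Iio a)) (nhds d) :=
    (hasDerivAt_iff_tendsto_slope.1 hf).mono_left
      (nhdsWithin_mono a (fun y hy => ne_of_lt hy))
  refine ge_of_tendsto hs ?_
  filter_upwards [h, self_mem_nhdsWithin] with t hft hta
  have h1 : t - a < 0 := sub_neg.2 hta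
  have h2 : f t - f a ≤ 0 := sub_nonpos.2 hft
  rw [slope_def_field]
  exact div_nonneg_of_nonpos h2 h1.le

lemma second_deriv_test {f f' : ℝ → ℝ} {d : ℝ}
    (h1 : ∀ s, HasDerivAt f (f' s) s) (h2 : HasDerivAt f' d 0)
    (hmax : IsLocalMax f 0) : d ≤ 0 := by
  by_contra hd
  push_neg at hd
  have h0 : f' 0 = 0 := hmax.hasDerivAt_eq_zero (h1 0)
  have hs : Filter.Tendsto (slope f' 0) (nhdsWithin 0 (Set.Ioi 0)) (nhds d) :=
    (hasDerivAt_iff_tendsto_slope.1 h2).mono_left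
      (nhdsWithin_mono 0 (fun y hy => ne_of_gt hy))
  have hev : ∀ᶠ s in nhdsWithin 0 (Set.Ioi 0), 0 < f' s := by
    filter_upwards [hs.eventually (eventually_gt_nhds (half_lt_self hd)), self_mem_nhdsWithin]
      with s hsl hs0
    have : (0:ℝ) < d / 2 := half_pos hd
    have hslope : slope f' 0 s = f' s / s := by simp [slope_def_field, h0]
    rw [hslope] at hsl
    have := (div_pos_iff.1 (lt_trans this hsl))
    rcases this with ⟨h,_⟩|⟨_,h2'⟩
    · exact h
    · exact absurd hs0 (not_lt.2 h2'.le)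
  -- extract δ
  rw [eventually_nhdsWithin_iff] at hev
  rw [Metric.eventually_nhds_iff] at hev
  obtain ⟨δ, hδ, hδ'⟩ := hev
  obtain ⟨η, hη, hη'⟩ := Metric.eventually_nhds_iff.1 hmax
  set s₀ := min δ η / 2 with hs₀
  have hs₀pos : 0 < s₀ := by positivity
  have hmono : StrictMonoOn f (Set.Icc 0 s₀) := by
    refine strictMonoOn_of_deriv_pos (convex_Icc _ _)
      (fun x _ => (h1 x).continuousAt.continuousWithinAt) ?_
    intro x hx
    rw [interior_Icc] at hx
    rw [(h1 x).deriv]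
    refine hδ' (y := x) ?_ hx.1
    have : |x| = x := abs_of_pos hx.1
    rw [Real.dist_eq, sub_zero, this]
    calc x < s₀ := hx.2
      _ ≤ δ / 2 := by rw [hs₀]; gcongr; exact min_le_left _ _
      _ < δ := half_lt_self hδ
  have hlt : f 0 < f s₀ := hmono ⟨le_refl 0, hs₀pos.le⟩ ⟨hs₀pos.le, le_refl _⟩ hs₀pos
  have : f s₀ ≤ f 0 := by
    refine hη' ?_
    rw [Real.dist_eq, sub_zero, abs_of_pos hs₀pos]
    calc s₀ ≤ η / 2 := by rw [hs₀]; gcongr; exact min_le_right _ _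
      _ < η := half_lt_self hη
  linarith

lemma slice_contDiff {n : ℕ} {u : EuclideanSpace ℝ (Fin n) → ℝ → ℝ}
    (hsm : ContDiffOn ℝ ((⊤ : ℕ∞) : WithTop ℕ∞)
      (fun p : EuclideanSpace ℝ (Fin n) × ℝ => u p.1 p.2) {p | 0 < p.2})
    {t : ℝ} (ht : 0 < t) : ContDiff ℝ ((⊤ : ℕ∞) : WithTop ℕ∞) (fun y => u y t) := by
  rw [← contDiffOn_univ]
  exact hsm.comp ((contDiff_id.prodMk contDiff_const).contDiffOn) (fun y _ => ht)

lemma dirDeriv_contDiff {n : ℕ} {f : EuclideanSpace ℝ (Fin n) → ℝ}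
    (hf : ContDiff ℝ ((⊤ : ℕ∞) : WithTop ℕ∞) f) (v : EuclideanSpace ℝ (Fin n)) :
    ContDiff ℝ ((⊤ : ℕ∞) : WithTop ℕ∞) (fun y => fderiv ℝ f y v) :=
  (hf.fderiv_right (by exact_mod_cast le_refl _)).clm_apply contDiff_const

lemma line_hasDerivAt {n : ℕ} {f : EuclideanSpace ℝ (Fin n) → ℝ}
    (hf : ContDiff ℝ ((⊤ : ℕ∞) : WithTop ℕ∞) f) (x₀ v : EuclideanSpace ℝ (Fin n)) (s : ℝ) :
    HasDerivAt (fun r : ℝ => f (x₀ + r • v)) (fderiv ℝ f (x₀ + s • v) v) s := by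
  have hL : HasDerivAt (fun r : ℝ => x₀ + r • v) v s := by
    simpa using ((hasDerivAt_id s).smul_const v).const_add x₀
  have hd : DifferentiableAt ℝ f (x₀ + s • v) :=
    (hf.differentiable (by simp)).differentiableAt
  exact hd.hasFDerivAt.comp_hasDerivAt s hL

lemma laplacian_neg {n : ℕ} (f : EuclideanSpace ℝ (Fin n) → ℝ) (x : EuclideanSpace ℝ (Fin n)) :
    laplacian (fun y => -f y) x = -laplacian f x := by
  unfold laplacian
  rw [← Finset.sum_neg_distrib]
  refine Finset.sum_congr rfl (fun j _ => ?_)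
  have : (fun y => fderiv ℝ (fun z => -f z) y (EuclideanSpace.single j 1))
      = fun y => -(fderiv ℝ f y (EuclideanSpace.single j 1)) := by
    funext y; rw [fderiv_fun_neg]; rfl
  rw [this, fderiv_fun_neg]
  rfl

lemma laplacian_sub {n : ℕ} {f g : EuclideanSpace ℝ (Fin n) → ℝ}
    (hf : ContDiff ℝ ((⊤ : ℕ∞) : WithTop ℕ∞) f) (hg : ContDiff ℝ ((⊤ : ℕ∞) : WithTop ℕ∞) g)
    (x : EuclideanSpace ℝ (Fin n)) :
    laplacian (fun y => f y - g y) x = laplacian f x - laplacian g x := by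
  unfold laplacian
  rw [← Finset.sum_sub_distrib]
  refine Finset.sum_congr rfl (fun j _ => ?_)
  have hfd : Differentiable ℝ f := hf.differentiable (by simp)
  have hgd : Differentiable ℝ g := hg.differentiable (by simp)
  have h1 : (fun y => fderiv ℝ (fun z => f z - g z) y (EuclideanSpace.single j 1))
      = fun y => fderiv ℝ f y (EuclideanSpace.single j 1)
        - fderiv ℝ g y (EuclideanSpace.single j 1) := by
    funext y; rw [fderiv_fun_sub (hfd y) (hgd y)]; rfl
  rw [h1, fderiv_fun_sub ((dirDeriv_contDiff hf _).differentiable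
      (by simp)).differentiableAt
    ((dirDeriv_contDiff hg _).differentiable (by simp)).differentiableAt]
  rfl

lemma heat_nonpos {n : ℕ} (u : EuclideanSpace ℝ (Fin n) → ℝ → ℝ)
    (hu : IsBoundedHeatSolution u) (h0 : ∀ x, u x 0 = 0) :
    ∀ (x : EuclideanSpace ℝ (Fin n)) (t : ℝ), 0 ≤ t → u x t ≤ 0 := by
  obtain ⟨hcont, ⟨C, hC⟩, hsm, hheat⟩ := hu
  intro x t ht
  rcases ht.eq_or_lt with h | htpos
  · rw [← h, h0]
  have key : ∀ ε : ℝ, 0 < ε → u x t ≤ ε * (‖x‖^2 + (2*(n:ℝ)+1)*t) := by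
    intro ε hε
    have hC0 : 0 ≤ C := le_trans (abs_nonneg _) (hC 0 0 le_rfl)
    set R : ℝ := max ‖x‖ (Real.sqrt (C/ε)) with hR
    have hRx : ‖x‖ ≤ R := le_max_left _ _
    have hR0 : 0 ≤ R := le_trans (norm_nonneg x) hRx
    have hRC : C ≤ ε * R^2 := by
      have h1 : Real.sqrt (C/ε) ≤ R := le_max_right _ _
      have h2 : C/ε ≤ R^2 := by
        rw [← Real.sq_sqrt (div_nonneg hC0 hε.le)]
        exact pow_le_pow_left₀ (Real.sqrt_nonneg _) h1 2
      have := (div_le_iff₀ hε).mp h2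
      linarith [this]
    set Φ : EuclideanSpace ℝ (Fin n) × ℝ → ℝ :=
      fun p => u p.1 p.2 - ε * (‖p.1‖^2 + (2*(n:ℝ)+1)*p.2) with hΦ
    set K : Set (EuclideanSpace ℝ (Fin n) × ℝ) :=
      (Metric.closedBall 0 R) ×ˢ (Set.Icc 0 t) with hK
    have hKc : IsCompact K := (isCompact_closedBall _ _).prod isCompact_Icc
    have hKne : K.Nonempty := ⟨(0, 0), by simp [hK, hR0, ht]⟩
    have hKsub : K ⊆ {p : EuclideanSpace ℝ (Fin n) × ℝ | 0 ≤ p.2} := fun p hp => hp.2.1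
    have hΦc : ContinuousOn Φ K := (hcont.mono hKsub).sub (by fun_prop)
    obtain ⟨⟨x₀, t₀⟩, hmem, hmax⟩ := hKc.exists_isMaxOn hKne hΦc
    have hxK : (x, t) ∈ K := ⟨mem_closedBall_zero_iff.mpr hRx, ⟨ht, le_rfl⟩⟩
    have hΦxt : Φ (x, t) ≤ Φ (x₀, t₀) := hmax hxK
    have hx₀ : ‖x₀‖ ≤ R := mem_closedBall_zero_iff.mp hmem.1
    have ht₀0 : (0:ℝ) ≤ t₀ := hmem.2.1
    have ht₀t : t₀ ≤ t := hmem.2.2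
    suffices hΦ0 : Φ (x₀, t₀) ≤ 0 by
      have h1 : Φ (x, t) ≤ 0 := le_trans hΦxt hΦ0
      simp only [hΦ] at h1
      linarith [h1]
    rcases ht₀0.eq_or_lt with h₀ | ht₀pos
    · simp only [hΦ]
      rw [← h₀, h0 x₀]
      have hn : (0:ℝ) ≤ (n:ℝ) := Nat.cast_nonneg n
      nlinarith [sq_nonneg ‖x₀‖, hε.le]
    rcases eq_or_lt_of_le hx₀ with hxR | hxlt
    · simp only [hΦ]
      rw [hxR]
      have hub : u x₀ t₀ ≤ C := le_trans (le_abs_self _) (hC x₀ t₀ ht₀0)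
      have hn : (0:ℝ) ≤ (n:ℝ) := Nat.cast_nonneg n
      nlinarith [mul_nonneg hε.le (mul_nonneg (by nlinarith : (0:ℝ) ≤ 2*(n:ℝ)+1) ht₀0)]
    exfalso
    set f : EuclideanSpace ℝ (Fin n) → ℝ := fun y => u y t₀ with hf
    have hfC : ContDiff ℝ ((⊤ : ℕ∞) : WithTop ℕ∞) f := slice_contDiff hsm ht₀pos
    set Δ : ℝ := laplacian f x₀ with hΔ
    have htime : 0 ≤ Δ - ε * (2*(n:ℝ)+1) := by
      have hψ : HasDerivAt (fun r => u x₀ r - ε * (‖x₀‖^2 + (2*(n:ℝ)+1)*r))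
          (Δ - ε * (2*(n:ℝ)+1)) t₀ := by
        refine (hheat x₀ t₀ ht₀pos).sub ?_
        have := (((hasDerivAt_id t₀).const_mul ((2*(n:ℝ)+1))).const_add (‖x₀‖^2)).const_mul ε
        simpa using this
      refine deriv_nonneg_of_left_max hψ ?_
      filter_upwards [self_mem_nhdsWithin,
        eventually_nhdsWithin_of_eventually_nhds (eventually_gt_nhds ht₀pos)] with r hr1 hr2
      have hrK : (x₀, r) ∈ K := ⟨hmem.1, ⟨hr2.le, le_trans (le_of_lt hr1) ht₀t⟩⟩
      exact hmax hrK
    have hspace : ∀ j : Fin n,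
        fderiv ℝ (fun y => fderiv ℝ f y (EuclideanSpace.single j 1)) x₀
          (EuclideanSpace.single j 1) ≤ 2*ε := by
      intro j
      set v : EuclideanSpace ℝ (Fin n) := EuclideanSpace.single j (1:ℝ) with hv
      have hnv : ‖v‖ = 1 := by rw [hv, EuclideanSpace.norm_single]; simp
      set b : ℝ := inner ℝ x₀ v with hb
      set A : ℝ → ℝ := fun s => f (x₀ + s • v)
        - ε * (‖x₀‖^2 + 2*b*s + s^2) - ε * ((2*(n:ℝ)+1)*t₀) with hA
      set A' : ℝ → ℝ := fun s => fderiv ℝ f (x₀ + s • v) v - ε * (2*b + 2*s) with hA'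
      have h1 : ∀ s, HasDerivAt A (A' s) s := by
        intro s
        refine HasDerivAt.sub_const _ ?_
        refine (line_hasDerivAt hfC x₀ v s).sub ?_
        have h2 : HasDerivAt (fun r : ℝ => ε * (‖x₀‖^2 + 2*b*r + r^2)) (ε * (2*b + 2*s)) s := by
          have := ((((hasDerivAt_id s).const_mul (2*b)).const_add (‖x₀‖^2)).add
            (hasDerivAt_pow 2 s)).const_mul ε
          refine this.congr_deriv ?_
          push_cast
          ring
        exact h2
      have h2 : HasDerivAt A' (fderiv ℝ (fun y => fderiv ℝ f y v) x₀ v - ε * 2) 0 := by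
        have hg := line_hasDerivAt (dirDeriv_contDiff hfC v) x₀ v 0
        have hq : HasDerivAt (fun s : ℝ => ε * (2*b + 2*s)) (ε * 2) 0 := by
          have := (((hasDerivAt_id (0:ℝ)).const_mul 2).const_add (2*b)).const_mul ε
          simpa using this
        have := hg.sub hq
        simp only [zero_smul, add_zero] at this; exact this
      have hexp : ∀ r : ℝ, ‖x₀ + r • v‖^2 = ‖x₀‖^2 + 2*b*r + r^2 := by
        intro r
        rw [norm_add_sq_real, real_inner_smul_right, norm_smul, hnv, mul_one, Real.norm_eq_abs, sq_abs, hb]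
        ring
      have hmaxA : IsLocalMax A 0 := by
        have : ∀ᶠ s in nhds (0:ℝ), A s ≤ A 0 := by
          rw [Metric.eventually_nhds_iff]
          refine ⟨R - ‖x₀‖, by linarith, ?_⟩
          intro s hs
          rw [Real.dist_eq, sub_zero] at hs
          have hmemK : (x₀ + s • v, t₀) ∈ K := by
            refine ⟨mem_closedBall_zero_iff.mpr ?_, ⟨ht₀pos.le, ht₀t⟩⟩
            calc ‖x₀ + s • v‖ ≤ ‖x₀‖ + ‖s • v‖ := norm_add_le _ _
              _ = ‖x₀‖ + |s| := by rw [norm_smul, hnv, mul_one]; rfl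
              _ ≤ R := by linarith [hs.le]
          have hΦle := hmax hmemK
          have e1 : A s = Φ (x₀ + s • v, t₀) := by
            simp only [hA, hΦ, hf, hexp s]; ring
          have e0 : A 0 = Φ (x₀, t₀) := by
            simp only [hA, hΦ, hf]
            rw [zero_smul, add_zero]; ring
          rw [e1, e0]; exact hΦle
        exact this
      have hd := second_deriv_test h1 h2 hmaxA
      linarith
    have hΔle : Δ ≤ (n:ℝ) * (2*ε) := by
      rw [hΔ]
      unfold laplacian
      calc (∑ j : Fin n, fderiv ℝ (fun y => fderiv ℝ f y (EuclideanSpace.single j 1)) x₀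
            (EuclideanSpace.single j 1))
          ≤ ∑ _j : Fin n, (2*ε) := Finset.sum_le_sum (fun j _ => hspace j)
        _ = (n:ℝ) * (2*ε) := by simp [Finset.sum_const, Finset.card_univ]
    nlinarith [htime, hΔle, hε]
  by_contra hpos
  push_neg at hpos
  set Q : ℝ := ‖x‖^2 + (2*(n:ℝ)+1)*t with hQ
  have hQpos : 0 < Q := by
    have hn : (0:ℝ) ≤ (n:ℝ) := Nat.cast_nonneg n
    nlinarith [sq_nonneg ‖x‖]
  have h2 := key (u x t / (2*Q)) (by positivity)
  have h3 : u x t / (2*Q) * Q = u x t / 2 := by field_simp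
  rw [h3] at h2
  linarith

end Helpers

lemma IsBoundedHeatSolution.neg {n : ℕ} {u : EuclideanSpace ℝ (Fin n) → ℝ → ℝ}
    (hu : IsBoundedHeatSolution u) : IsBoundedHeatSolution (fun x t => -(u x t)) := by
  obtain ⟨hc, ⟨C, hC⟩, hs, hh⟩ := hu
  refine ⟨hc.neg, ⟨C, fun x t ht => by rw [abs_neg]; exact hC x t ht⟩, hs.neg, ?_⟩
  intro x t ht
  rw [laplacian_neg (fun y => u y t) x]
  exact (hh x t ht).neg

lemma IsBoundedHeatSolution.sub {n : ℕ} {u v : EuclideanSpace ℝ (Fin n) → ℝ → ℝ}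
    (hu : IsBoundedHeatSolution u) (hv : IsBoundedHeatSolution v) :
    IsBoundedHeatSolution (fun x t => u x t - v x t) := by
  obtain ⟨huc, ⟨Cu, hCu⟩, hus, huh⟩ := hu
  obtain ⟨hvc, ⟨Cv, hCv⟩, hvs, hvh⟩ := hv
  refine ⟨huc.sub hvc, ⟨Cu + Cv, fun x t ht => ?_⟩, hus.sub hvs, ?_⟩
  · calc |u x t - v x t| ≤ |u x t| + |v x t| := abs_sub _ _
      _ ≤ Cu + Cv := add_le_add (hCu x t ht) (hCv x t ht)
  · intro x t ht
    rw [laplacian_sub (slice_contDiff hus ht) (slice_contDiff hvs ht) x]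
    exact (huh x t ht).sub (hvh x t ht)

/-- Uniqueness for the heat equation with modest growth: a bounded solution of the heat
equation on `ℝⁿ × [0,∞)` vanishing at `t = 0` vanishes identically; consequently, two bounded
solutions with the same (bounded continuous) initial data coincide on `ℝⁿ × [0,∞)`. -/
theorem heat_equation_uniqueness (n : ℕ) :
    (∀ u : EuclideanSpace ℝ (Fin n) → ℝ → ℝ, IsBoundedHeatSolution u →
      (∀ x, u x 0 = 0) → ∀ (x : EuclideanSpace ℝ (Fin n)) (t : ℝ), 0 ≤ t → u x t = 0)
      ∧ ∀ (f : EuclideanSpace ℝ (Fin n) → ℝ), Continuous f → (∃ C, ∀ x, |f x| ≤ C) →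
          ∀ u v : EuclideanSpace ℝ (Fin n) → ℝ → ℝ,
            IsBoundedHeatSolution u → IsBoundedHeatSolution v →
            (∀ x, u x 0 = f x) → (∀ x, v x 0 = f x) →
            ∀ (x : EuclideanSpace ℝ (Fin n)) (t : ℝ), 0 ≤ t → u x t = v x t := by
  have part1 : ∀ u : EuclideanSpace ℝ (Fin n) → ℝ → ℝ, IsBoundedHeatSolution u →
      (∀ x, u x 0 = 0) → ∀ (x : EuclideanSpace ℝ (Fin n)) (t : ℝ), 0 ≤ t → u x t = 0 := by
    intro u hu h0 x t ht
    have h1 := heat_nonpos u hu h0 x t ht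
    have h2 := heat_nonpos (fun x t => -(u x t)) hu.neg (fun x => by simp [h0 x]) x t ht
    linarith
  refine ⟨part1, ?_⟩
  intro f hf hbd u v hu hv hu0 hv0 x t ht
  have h := part1 (fun x t => u x t - v x t) (hu.sub hv)
    (fun x => by simp [hu0 x, hv0 x]) x t ht
  linarith
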